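/- For any prime p and any natural number k, the integer (kp)!/((p!)^k · k!) is congruent to 1 modulo p. -/

import Mathlib

private def auxN (p : ℕ) : ℕ → ℕ
  | 0 => 1
  | k + 1 => auxN p k * Nat.choose (k * p + (p - 1)) (p - 1)

private lemma auxN_mul (p : ℕ) (hp : 0 < p) (k : ℕ) :
    auxN p k * (Nat.factorial p ^ k * Nat.factorial k) = Nat.factorial (k * p) := by
  induction k with
  | zero => simp [auxN]
  | succ k ih =>
    have key : (k + 1) * Nat.choose (k * p + (p - 1)) (p - 1) = Nat.choose (k * p + p) p := by
      have h := Nat.add_one_mul_choose_eq (k * p + (p - 1)) (p - 1)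
      have h1 : k * p + (p - 1) + 1 = k * p + p := by omega
      have h2 : p - 1 + 1 = p := by omega
      rw [h1, h2] at h
      have : (k + 1) * Nat.choose (k * p + (p - 1)) (p - 1) * p
          = Nat.choose (k * p + p) p * p := by
        rw [← h]; ring_nf
      exact Nat.eq_of_mul_eq_mul_right hp this
    have hfac := Nat.add_choose_mul_factorial_mul_factorial (k * p) p
    have h3 : (k + 1) * p = k * p + p := by ring
    rw [h3, ← hfac]
    calc auxN p (k + 1) * (Nat.factorial p ^ (k + 1) * Nat.factorial (k + 1))
        = ((k + 1) * Nat.choose (k * p + (p - 1)) (p - 1)) *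
            (auxN p k * (Nat.factorial p ^ k * Nat.factorial k)) * Nat.factorial p := by
          simp only [auxN, Nat.factorial_succ, pow_succ]; ring
      _ = Nat.choose (k * p + p) p * Nat.factorial (k * p) * Nat.factorial p := by
          rw [key, ih]

private lemma auxN_modEq (p : ℕ) (hp : p.Prime) (k : ℕ) : auxN p k ≡ 1 [MOD p] := by
  haveI := Fact.mk hp
  have hp2 : 2 ≤ p := hp.two_le
  induction k with
  | zero => rfl
  | succ k ih =>
    have hc : Nat.choose (k * p + (p - 1)) (p - 1) ≡ 1 [MOD p] := by
      have h := Choose.choose_modEq_choose_mod_mul_choose_div_nat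
        (n := k * p + (p - 1)) (k := p - 1) (p := p)
      have hmod : (k * p + (p - 1)) % p = p - 1 := by
        rw [add_comm, Nat.add_mul_mod_self_right]
        exact Nat.mod_eq_of_lt (by omega)
      have hdiv : (k * p + (p - 1)) / p = k := by
        rw [add_comm, Nat.add_mul_div_right _ _ hp.pos, Nat.div_eq_of_lt (by omega)]
        omega
      have hmod2 : (p - 1) % p = p - 1 := Nat.mod_eq_of_lt (by omega)
      have hdiv2 : (p - 1) / p = 0 := Nat.div_eq_of_lt (by omega)
      rw [hmod, hdiv, hmod2, hdiv2] at h
      simpa using h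
    have := ih.mul hc
    simpa [auxN] using this

/-- For any prime `p` and any natural number `k`, the integer
`(kp)! / ((p!)^k * k!)` is congruent to `1` modulo `p`. -/
theorem stmt_0 (p : ℕ) (hp : p.Prime) (k : ℕ) :
    Nat.factorial (k * p) / (Nat.factorial p ^ k * Nat.factorial k) ≡ 1 [MOD p] := by
  have h := auxN_mul p hp.pos k
  have hpos : 0 < Nat.factorial p ^ k * Nat.factorial k :=
    Nat.mul_pos (Nat.pow_pos (Nat.factorial_pos p)) (Nat.factorial_pos k)
  have hq : Nat.factorial (k * p) / (Nat.factorial p ^ k * Nat.factorial k) = auxN p k := by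
    rw [← h, Nat.mul_div_cancel _ hpos]
  rw [hq]
  exact auxN_modEq p hp k
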